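/- In a maximally ψ-epistemic model the probability of the outcome φ is exactly the measure of its cosupport. Concretely: let μ and ν be probability measures on a measurable space (Λ, Σ), let I be a countable type, and for each i ∈ I let f_i : Λ → ℝ be measurable with 0 ≤ f_i(λ) ≤ 1 for every λ and ∫ f_i dν = 1. Suppose that for every i ∈ I and every measurable set Ω with ν(Ω) = 1 one has ∫_Ω f_i dμ = ∫_Λ f_i dμ. Then for every i ∈ I, ∫_Λ f_i dμ = μ(⋂_{j ∈ I} {λ ∈ Λ : f_j(λ) = 1}). -/

import Mathlib

open MeasureTheory

/-- In a maximally ψ-epistemic model the probability of the outcome `φ` is exactly the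
measure of its cosupport: if the `[0,1]`-valued measurable response functions `f i`
(`i` ranging over a countable type) satisfy `∫ f i dν = 1` and, for every measurable `Ω`
of `ν`-measure one, `∫_Ω f i dμ = ∫ f i dμ`, then for every `i`,
`∫ f i dμ = μ(⋂ j, {f j = 1})`. -/
theorem stmt19 {Λ : Type*} [MeasurableSpace Λ]
    (μ ν : Measure Λ) [IsProbabilityMeasure μ] [IsProbabilityMeasure ν]
    (I : Type*) [Countable I]
    (f : I → Λ → ℝ) (hmeas : ∀ i, Measurable (f i))
    (h0 : ∀ i l, 0 ≤ f i l) (h1 : ∀ i l, f i l ≤ 1)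
    (hν : ∀ i, ∫ l, f i l ∂ν = 1)
    (hME : ∀ i, ∀ Ω : Set Λ, MeasurableSet Ω → ν Ω = 1 →
      ∫ l in Ω, f i l ∂μ = ∫ l, f i l ∂μ) :
    ∀ i, ∫ l, f i l ∂μ = (μ (⋂ j, {l : Λ | f j l = 1})).toReal := by
  intro i
  set C : Set Λ := ⋂ j, {l : Λ | f j l = 1} with hC
  have hSmeas : ∀ j, MeasurableSet {l : Λ | f j l = 1} := fun j =>
    (hmeas j) (measurableSet_singleton 1)
  have hCmeas : MeasurableSet C := MeasurableSet.iInter hSmeas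
  -- integrability of f j w.r.t. ν
  have hintf : ∀ j, Integrable (f j) ν := by
    intro j
    refine Integrable.mono' (integrable_const (1 : ℝ))
      (hmeas j).aestronglyMeasurable ?_
    filter_upwards with l
    rw [Real.norm_eq_abs, abs_of_nonneg (h0 j l)]
    exact h1 j l
  have hint : ∀ j, Integrable (fun l => 1 - f j l) ν := fun j =>
    (integrable_const (1 : ℝ)).sub (hintf j)
  -- each set has ν-measure 1
  have hS1 : ∀ j, ν {l : Λ | f j l = 1} = 1 := by
    intro j
    have hzero : ∫ l, (1 - f j l) ∂ν = 0 := by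
      rw [integral_sub (integrable_const 1) (hintf j)]
      simp [hν j]
    have := (integral_eq_zero_iff_of_nonneg (fun l => sub_nonneg.2 (h1 j l))
      (hint j)).1 hzero
    have hae : ∀ᵐ l ∂ν, f j l = 1 := by
      filter_upwards [this] with l hl
      have : 1 - f j l = 0 := hl
      linarith
    have hc : ν {l : Λ | f j l = 1}ᶜ = 0 := ae_iff.1 hae
    exact (prob_compl_eq_zero_iff (hSmeas j)).1 hc
  have hνC : ν C = 1 := by
    rw [← prob_compl_eq_zero_iff hCmeas]
    have : Cᶜ = ⋃ j, ({l : Λ | f j l = 1})ᶜ := by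
      simp [hC, Set.compl_iInter]
    rw [this]
    exact measure_iUnion_null fun j => (prob_compl_eq_zero_iff (hSmeas j)).2 (hS1 j)
  have key := hME i C hCmeas hνC
  rw [← key]
  have : ∫ l in C, f i l ∂μ = ∫ l in C, (1 : ℝ) ∂μ := by
    refine setIntegral_congr_fun hCmeas fun l hl => ?_
    exact Set.mem_iInter.1 hl i
  rw [this, setIntegral_const, smul_eq_mul, mul_one]
  rfl
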